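/- Under Assumption ε-small (every pair weight V_{{i,j}} is at most ε times the minimum of v₀ and all singleton weights V_{{k}}), for every set C ⊆ W: R_MNL(C) − R₂(C) ≤ (ε·|C|/2)·R_MNL(C), i.e., R_MNL(C) ≤ (2/(2 − ε|C|))·R₂(C) whenever ε|C| < 2. -/

import Mathlib

open Finset

/-- Under the ε-small pair weight assumption, the MNL revenue is not much larger than the
BundleMVL-2 revenue: R_MNL(C) − R₂(C) ≤ (ε|C|/2)·R_MNL(C), hence
R_MNL(C) ≤ (2/(2−ε|C|))·R₂(C) whenever ε|C| < 2. -/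
theorem mnl_upper_bound_by_bundle {ι : Type*} [LinearOrder ι]
    (W : Finset ι) (r V1 : ι → ℝ) (V2 : ι → ι → ℝ) (v0 ε : ℝ)
    (hv0 : 0 < v0) (hε : 0 < ε)
    (hr : ∀ i ∈ W, 0 < r i)
    (hV1 : ∀ i ∈ W, 0 < V1 i)
    (hV2nn : ∀ i j, 0 ≤ V2 i j)
    (hV2symm : ∀ i j, V2 i j = V2 j i)
    (hsmall : ∀ i ∈ W, ∀ j ∈ W, i ≠ j → V2 i j ≤ ε * v0 ∧ ∀ k ∈ W, V2 i j ≤ ε * V1 k)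
    (RMNL R2 : Finset ι → ℝ)
    (hRMNL : ∀ C, RMNL C = (∑ i ∈ C, V1 i * r i) / (v0 + ∑ i ∈ C, V1 i))
    (hR2 : ∀ C, R2 C =
      ((∑ i ∈ C, V1 i * r i) + ∑ i ∈ C, ∑ j ∈ C.filter (fun j => i < j), V2 i j * (r i + r j)) /
      (v0 + (∑ i ∈ C, V1 i) + ∑ i ∈ C, ∑ j ∈ C.filter (fun j => i < j), V2 i j))
    (C : Finset ι) (hC : C ⊆ W) :
    RMNL C - R2 C ≤ (ε * C.card / 2) * RMNL C ∧
    (ε * C.card < 2 → RMNL C ≤ (2 / (2 - ε * C.card)) * R2 C) := by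
  set N : ℝ := ∑ i ∈ C, V1 i * r i with hN
  set D : ℝ := v0 + ∑ i ∈ C, V1 i with hD
  set P : ℝ := ∑ i ∈ C, ∑ j ∈ C.filter (fun j => i < j), V2 i j with hP
  set Q : ℝ := ∑ i ∈ C, ∑ j ∈ C.filter (fun j => i < j), V2 i j * (r i + r j) with hQ
  have hV1nn : ∀ i ∈ C, 0 ≤ V1 i := fun i hi => (hV1 i (hC hi)).le
  have hSV1 : 0 ≤ ∑ i ∈ C, V1 i := Finset.sum_nonneg hV1nn
  have hDpos : 0 < D := by positivity
  have hNnn : 0 ≤ N := Finset.sum_nonneg fun i hi =>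
    mul_nonneg (hV1 i (hC hi)).le (hr i (hC hi)).le
  have hPnn : 0 ≤ P := Finset.sum_nonneg fun i _ => Finset.sum_nonneg fun j _ => hV2nn i j
  have hQnn : 0 ≤ Q := Finset.sum_nonneg fun i hi => Finset.sum_nonneg fun j hj => by
    have hj' := Finset.mem_filter.mp hj
    exact mul_nonneg (hV2nn i j) (by
      have := hr i (hC hi); have := hr j (hC hj'.1); linarith)
  have hDPpos : 0 < D + P := by linarith
  -- double-counting bound on P
  have hPalt : P = ∑ j ∈ C, ∑ i ∈ C.filter (fun i => i < j), V2 i j := by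
    rw [hP]
    calc ∑ i ∈ C, ∑ j ∈ C.filter (fun j => i < j), V2 i j
        = ∑ i ∈ C, ∑ j ∈ C, if i < j then V2 i j else 0 := by
          simp [Finset.sum_filter]
      _ = ∑ j ∈ C, ∑ i ∈ C, if i < j then V2 i j else 0 := Finset.sum_comm
      _ = ∑ j ∈ C, ∑ i ∈ C.filter (fun i => i < j), V2 i j := by
          simp [Finset.sum_filter]
  have hbound1 : P ≤ ∑ i ∈ C, ε * V1 i * ((C.filter (fun j => i < j)).card : ℝ) := by
    rw [hP]
    refine Finset.sum_le_sum fun i hi => ?_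
    calc ∑ j ∈ C.filter (fun j => i < j), V2 i j
        ≤ ∑ _j ∈ C.filter (fun j => i < j), ε * V1 i := by
          refine Finset.sum_le_sum fun j hj => ?_
          have hj' := Finset.mem_filter.mp hj
          exact (hsmall i (hC hi) j (hC hj'.1) (ne_of_lt hj'.2)).2 i (hC hi)
      _ = ε * V1 i * ((C.filter (fun j => i < j)).card : ℝ) := by
          rw [Finset.sum_const, nsmul_eq_mul, mul_comm]
  have hbound2 : P ≤ ∑ j ∈ C, ε * V1 j * ((C.filter (fun i => i < j)).card : ℝ) := by
    rw [hPalt]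
    refine Finset.sum_le_sum fun j hj => ?_
    calc ∑ i ∈ C.filter (fun i => i < j), V2 i j
        ≤ ∑ _i ∈ C.filter (fun i => i < j), ε * V1 j := by
          refine Finset.sum_le_sum fun i hi => ?_
          have hi' := Finset.mem_filter.mp hi
          exact (hsmall i (hC hi'.1) j (hC hj) (ne_of_lt hi'.2)).2 j (hC hj)
      _ = ε * V1 j * ((C.filter (fun i => i < j)).card : ℝ) := by
          rw [Finset.sum_const, nsmul_eq_mul, mul_comm]
  have hcard : ∀ k, (C.filter (fun j => k < j)).card + (C.filter (fun i => i < k)).card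
      ≤ C.card := by
    intro k
    have hdisj : Disjoint (C.filter (fun j => k < j)) (C.filter (fun i => i < k)) := by
      rw [Finset.disjoint_left]
      intro a ha hb
      have h1 := (Finset.mem_filter.mp ha).2
      have h2 := (Finset.mem_filter.mp hb).2
      exact absurd (h1.trans h2) (lt_irrefl k)
    rw [← Finset.card_union_of_disjoint hdisj]
    exact Finset.card_le_card (Finset.union_subset (Finset.filter_subset _ _)
      (Finset.filter_subset _ _))
  have h2P : 2 * P ≤ ε * C.card * D := by
    have hsum : (∑ i ∈ C, ε * V1 i * ((C.filter (fun j => i < j)).card : ℝ))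
        + (∑ j ∈ C, ε * V1 j * ((C.filter (fun i => i < j)).card : ℝ))
        ≤ ε * C.card * ∑ i ∈ C, V1 i := by
      rw [← Finset.sum_add_distrib, Finset.mul_sum]
      refine Finset.sum_le_sum fun i hi => ?_
      have h1 : ((C.filter (fun j => i < j)).card : ℝ)
          + ((C.filter (fun j => j < i)).card : ℝ) ≤ (C.card : ℝ) := by
        exact_mod_cast hcard i
      have hV := hV1 i (hC hi)
      nlinarith [mul_le_mul_of_nonneg_left h1 (mul_nonneg hε.le hV.le)]
    have hDge : ∑ i ∈ C, V1 i ≤ D := by rw [hD]; linarith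
    have : ε * C.card * ∑ i ∈ C, V1 i ≤ ε * C.card * D :=
      mul_le_mul_of_nonneg_left hDge (by positivity)
    linarith
  -- main inequality
  have hmain : RMNL C - R2 C ≤ (ε * C.card / 2) * RMNL C := by
    rw [hRMNL, hR2, ← hN, ← hD, ← hP, ← hQ]
    have e1 : N / D - (N + Q) / (D + P) = (N * P - Q * D) / (D * (D + P)) := by
      field_simp
      ring
    have e2 : (ε * C.card / 2) * (N / D)
        = (ε * C.card / 2 * N * (D + P)) / (D * (D + P)) := by
      field_simp
    rw [e1, e2, div_le_div_iff_of_pos_right (by positivity)]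
    have hNP : N * P ≤ N * (ε * C.card * D / 2) := by
      apply mul_le_mul_of_nonneg_left _ hNnn
      nlinarith [h2P]
    nlinarith [mul_nonneg hQnn hDpos.le, mul_nonneg (mul_nonneg (mul_nonneg hε.le
      (Nat.cast_nonneg C.card : (0:ℝ) ≤ C.card)) hNnn) hPnn]
  refine ⟨hmain, fun hlt => ?_⟩
  have hpos : 0 < 2 - ε * C.card := by linarith
  have hmul : RMNL C * (2 - ε * C.card) ≤ 2 * R2 C := by nlinarith [hmain]
  rw [div_mul_eq_mul_div, le_div_iff₀ hpos]
  linarith
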